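/- arXiv:2210.05543 — 11 statements merged into one kernel-verified Lean document; each statement's English description precedes it below -/
import Mathlib

section
/- For every integer M ≥ 2 and all reals b₁, …, b_M with 0 ≤ b_i ≤ M+1 for every i, there exists a real p with 0 < p < 2(M+1) such that for every i ∈ {1,…,M}: max(b_i + p, 2M+2 − b_i) ≥ (1 + 1/(4M+3)) · (M + 1 + p/2). -/
/-- Bernoulli-type inequality: `(1+x)^n * (1 - n*x) ≤ 1` for `x ≥ 0`. -/
lemma stmt_0_bern (n : ℕ) (x : ℝ) (hx : 0 ≤ x) : (1 + x) ^ n * (1 - n * x) ≤ 1 := by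
  induction n with
  | zero => simp
  | succ n ih =>
    have hpow : (0:ℝ) ≤ (1 + x) ^ n := by positivity
    have hpow' : (0:ℝ) ≤ (1 + x) ^ (n+1) := by positivity
    rcases le_or_gt (1 - ((n:ℝ)+1) * x) 0 with h | h
    · have h0 : (1 + x) ^ (n+1) * (1 - ((n:ℝ)+1) * x) ≤ 0 :=
        mul_nonpos_of_nonneg_of_nonpos hpow' h
      push_cast
      linarith
    · have hn : (0:ℝ) ≤ (n:ℝ) := Nat.cast_nonneg n
      have key : (1 + x) * (1 - ((n:ℝ)+1) * x) ≤ 1 - (n:ℝ) * x := by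
        nlinarith [sq_nonneg x, mul_nonneg hn (sq_nonneg x)]
      calc (1 + x) ^ (n+1) * (1 - ((n:ℕ)+1 : ℕ) * x)
          = (1 + x) ^ n * ((1 + x) * (1 - ((n:ℝ)+1) * x)) := by push_cast; ring
        _ ≤ (1 + x) ^ n * (1 - (n:ℝ) * x) := by
            exact mul_le_mul_of_nonneg_left key hpow
        _ ≤ 1 := ih

/-- Arithmetic core of Proposition 1 (unsorted case): for M ≥ 2 solutions with
"both-busy" durations b i ∈ [0, M+1], there is a third-job size p with
0 < p < 2(M+1) such that every solution's maximum completion time,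
max (b i + p) (2M+2 − b i), is at least (1 + 1/(4M+3)) times the optimal
offline makespan M + 1 + p/2. -/
theorem stmt_0 (M : ℕ) (hM : 2 ≤ M) (b : Fin M → ℝ)
    (hb : ∀ i, 0 ≤ b i ∧ b i ≤ (M : ℝ) + 1) :
    ∃ p : ℝ, 0 < p ∧ p < 2 * ((M : ℝ) + 1) ∧
      ∀ i, max (b i + p) (2 * (M : ℝ) + 2 - b i) ≥
        (1 + 1 / (4 * (M : ℝ) + 3)) * ((M : ℝ) + 1 + p / 2) := by
  set m : ℝ := (M : ℝ) with hmdef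
  have hm : (2:ℝ) ≤ m := by rw [hmdef]; exact_mod_cast hM
  have h1 : (0:ℝ) < 2*m+1 := by linarith
  have h2 : (0:ℝ) < 4*m+3 := by linarith
  set r : ℝ := (2*m+2)/(2*m+1) with hrdef
  set q : ℕ → ℝ := fun k => r ^ k * (2*m+3) - (2*m+2) with hqdef
  have hq0 : q 0 = 1 := by simp [hqdef]; ring
  have hrec : ∀ k, q (k+1) = (2*m+2) * (q k + 1) / (2*m+1) := by
    intro k
    simp only [hqdef, hrdef, pow_succ]
    field_simp
    ring
  have hq1 : ∀ k, 1 ≤ q k := by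
    intro k
    induction k with
    | zero => rw [hq0]
    | succ k ih =>
      rw [hrec k, le_div_iff₀ h1]
      nlinarith
  have hmono : Monotone q := by
    apply monotone_nat_of_le_succ
    intro k
    have := hq1 k
    rw [hrec k]
    rw [le_div_iff₀ h1]
    nlinarith
  have hqM : q M < 2*m+2 := by
    have hb := stmt_0_bern M (1/(2*m+1)) (by positivity)
    have hre : (1 + 1/(2*m+1)) = r := by rw [hrdef, one_add_div h1.ne']; ring
    rw [hre] at hb
    -- hb : r^M * (1 - M/(2m+1)) ≤ 1
    have hfac : 1 - (M:ℝ) * (1/(2*m+1)) = (m+1)/(2*m+1) := by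
      rw [← hmdef]; field_simp; ring
    rw [hfac] at hb
    have hmp : (0:ℝ) < (m+1)/(2*m+1) := by positivity
    rw [mul_div_assoc', div_le_one h1] at hb
    have hrM : r ^ M ≤ (2*m+1)/(m+1) := by
      rw [le_div_iff₀ (by linarith : (0:ℝ) < m+1)]
      exact hb
    have hq : q M = r ^ M * (2*m+3) - (2*m+2) := rfl
    have h3 : r ^ M * (2*m+3) ≤ (2*m+1)/(m+1) * (2*m+3) := by
      apply mul_le_mul_of_nonneg_right hrM (by linarith)
    rw [hq]
    have h4 : (2*m+1)/(m+1) * (2*m+3) < 4*m+4 := by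
      rw [div_mul_eq_mul_div, div_lt_iff₀ (by linarith : (0:ℝ) < m+1)]
      nlinarith
    linarith
  set α : ℝ := 1 + 1/(4*m+3) with hαdef
  set L : ℕ → ℝ := fun k => 2*m+2 - α*(m+1+q k/2) with hLdef
  set U : ℕ → ℝ := fun k => α*(m+1+q k/2) - q k with hUdef
  clear_value U L α q r
  have hUL : ∀ k, U (k+1) = L k := by
    intro k
    simp only [hUdef, hLdef, hαdef, hrec k]
    field_simp
    ring
  have hLanti : ∀ j k, j ≤ k → L k ≤ L j := by
    intro j k hjk
    simp only [hLdef]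
    have hq := hmono hjk
    have hα : 0 < α := by rw [hαdef]; positivity
    have h3 : α * (m + 1 + q j / 2) ≤ α * (m + 1 + q k / 2) :=
      mul_le_mul_of_nonneg_left (by linarith) hα.le
    linarith
  have hsep : ∀ j k, j < k → U k ≤ L j := by
    intro j k hjk
    obtain ⟨s, rfl⟩ : ∃ s, k = s + 1 := ⟨k - 1, by omega⟩
    rw [hUL s]
    exact hLanti j s (by omega)
  by_contra hcon
  push_neg at hcon
  have key : ∀ k : Fin (M+1), ∃ i : Fin M, L k.val < b i ∧ b i < U k.val := by
    intro k
    have hpos : 0 < q k.val := lt_of_lt_of_le one_pos (hq1 k.val)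
    have hlt : q k.val < 2 * (m + 1) := by
      have := hmono (Nat.le_of_lt_succ k.isLt)
      linarith
    obtain ⟨i, hi⟩ := hcon (q k.val) hpos hlt
    rw [max_lt_iff] at hi
    refine ⟨i, ?_, ?_⟩
    · simp only [hLdef]; linarith [hi.2]
    · simp only [hUdef]; linarith [hi.1]
  choose f hf using key
  have hinj : Function.Injective f := by
    intro k k' hkk'
    by_contra hne
    rcases Nat.lt_or_ge k.val k'.val with h | h
    · have h1 := (hf k).1
      have h2 := (hf k').2
      rw [hkk'] at h1
      have := hsep k.val k'.val h
      linarith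
    · have h' : k'.val < k.val := by
        rcases lt_or_eq_of_le h with h | h
        · exact h
        · exact absurd (Fin.ext h.symm) hne
      have h1 := (hf k').1
      have h2 := (hf k).2
      rw [hkk'] at h2
      have := hsep k'.val k.val h'
      linarith
  have := Fintype.card_le_of_injective f hinj
  simp at this
end

section
/- For every integer M ≥ 2 and all reals b₁, …, b_M with 0 ≤ b_i ≤ M+1 for every i, there exists a real p with 0 < p < M+1 such that for every i ∈ {1,…,M}: max(b_i + p, 2M+2 − b_i) ≥ (1 + 1/(6M+5)) · (M + 1 + p/2). -/
/-- Arithmetic core of Proposition 1 (sorted case): for M ≥ 2 solutions with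
"both-busy" durations b i ∈ [0, M+1], there is a third-job size p with
0 < p < M+1 such that every solution's maximum completion time,
max (b i + p) (2M+2 − b i), is at least (1 + 1/(6M+5)) times the optimal
offline makespan M + 1 + p/2. -/
theorem stmt_1 (M : ℕ) (hM : 2 ≤ M) (b : Fin M → ℝ)
    (hb : ∀ i, 0 ≤ b i ∧ b i ≤ (M : ℝ) + 1) :
    ∃ p : ℝ, 0 < p ∧ p < (M : ℝ) + 1 ∧
      ∀ i, max (b i + p) (2 * (M : ℝ) + 2 - b i) ≥
        (1 + 1 / (6 * (M : ℝ) + 5)) * ((M : ℝ) + 1 + p / 2) := by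
  have hMR : (2:ℝ) ≤ (M:ℝ) := by exact_mod_cast hM
  have hden : (0:ℝ) < 6*(M:ℝ)+5 := by linarith
  set ε : ℝ := 1 / (6*(M:ℝ)+5) with hεdef
  have hεpos : 0 < ε := by positivity
  have hεeq : ε * (6*(M:ℝ)+5) = 1 := by rw [hεdef, one_div, inv_mul_cancel₀ hden.ne']
  have hε1 : ε ≤ 1/17 := by
    rw [hεdef]
    rw [div_le_div_iff₀ hden (by norm_num)]
    linarith
  clear_value ε
  -- candidate p values: q k = k + 1/2 for k = 0..M;
  -- bad interval of b-values for candidate q k is (lo k, hi k)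
  set q : Fin (M+1) → ℝ := fun k => (k:ℝ) + 1/2 with hq
  set lo : Fin (M+1) → ℝ := fun k => (1-ε)*((M:ℝ)+1) - (1+ε)*(q k)/2 with hlo
  set hi : Fin (M+1) → ℝ := fun k => (1+ε)*((M:ℝ)+1) - (1-ε)*(q k)/2 with hhi
  clear_value q lo hi
  -- disjointness: if k < k' then hi k' ≤ lo k
  have hdisj : ∀ k k' : Fin (M+1), (k:ℕ) < (k':ℕ) → hi k' ≤ lo k := by
    intro k k' hkk
    have hq1 : q k + 1 ≤ q k' := by
      simp only [hq]
      have : (k:ℝ) + 1 ≤ (k':ℝ) := by exact_mod_cast hkk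
      linarith
    have hk'le : (k':ℕ) ≤ M := Nat.lt_succ_iff.mp k'.isLt
    have hkle : (k:ℕ) + 1 ≤ M := le_trans hkk hk'le
    have hkleR : (k:ℝ) + 1 ≤ (M:ℝ) := by exact_mod_cast hkle
    have hqk : q k ≤ (M:ℝ) - 1/2 := by simp only [hq]; linarith
    have e2 : ε * q k ≤ ε * ((M:ℝ) - 1/2) :=
      mul_le_mul_of_nonneg_left hqk hεpos.le
    have e3 : (1-ε) * (q k + 1) ≤ (1-ε) * q k' :=
      mul_le_mul_of_nonneg_left hq1 (by linarith)
    simp only [hlo, hhi]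
    nlinarith [hεeq]
  -- exists a candidate avoiding all bad intervals (pigeonhole)
  have key : ∃ k : Fin (M+1), ∀ i, ¬(lo k < b i ∧ b i < hi k) := by
    by_contra h
    push_neg at h
    choose f hf1 hf2 using h
    obtain ⟨k, k', hne, hfk⟩ :=
      Fintype.exists_ne_map_eq_of_card_lt f (by simp)
    rcases lt_or_gt_of_ne (fun hv => hne (Fin.ext hv) : (k:ℕ) ≠ (k':ℕ)) with hlt | hlt
    · have hd := hdisj k k' hlt
      have h1 := hf1 k; have h2 := hf2 k'
      rw [hfk] at h1
      linarith
    · have hd := hdisj k' k hlt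
      have h1 := hf1 k'; have h2 := hf2 k
      rw [← hfk] at h1
      linarith
  obtain ⟨k, hk⟩ := key
  have hkM : (k:ℝ) ≤ (M:ℝ) := by exact_mod_cast Nat.lt_succ_iff.mp k.isLt
  refine ⟨q k, by simp only [hq]; positivity, by simp only [hq]; linarith, ?_⟩
  intro i
  rw [ge_iff_le]
  have hkk := hk i
  simp only [hlo, hhi] at hkk
  rcases not_and_or.mp hkk with hcase | hcase
  · push_neg at hcase
    refine le_max_of_le_right ?_
    linarith
  · push_neg at hcase
    refine le_max_of_le_left ?_
    linarith
end

section
/- Let α = (√5 − 1)/2. There do not exist a real r with r < √5 − 1 and nonnegative reals t₁, t₂, u₁, u₂ satisfying all of: t₁ + t₂ = 1, u₁ + u₂ = 1 + α, t₁ ≤ r/2, min(t₂ + α, u₁) ≤ r·(1+α)/2, and min(t₂ + α + 1, u₂ + α + 1) ≤ r·(1+α). -/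
/-- Arithmetic core of Proposition 2: no competitive ratio r < √5 − 1 is
achievable by two parallel preemptive solutions on two identical machines. -/
theorem stmt_2 :
    ¬ ∃ (r t₁ t₂ u₁ u₂ : ℝ),
      r < Real.sqrt 5 - 1 ∧
      0 ≤ t₁ ∧ 0 ≤ t₂ ∧ 0 ≤ u₁ ∧ 0 ≤ u₂ ∧
      t₁ + t₂ = 1 ∧
      u₁ + u₂ = 1 + (Real.sqrt 5 - 1) / 2 ∧
      t₁ ≤ r / 2 ∧
      min (t₂ + (Real.sqrt 5 - 1) / 2) u₁ ≤ r * (1 + (Real.sqrt 5 - 1) / 2) / 2 ∧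
      min (t₂ + (Real.sqrt 5 - 1) / 2 + 1) (u₂ + (Real.sqrt 5 - 1) / 2 + 1) ≤
        r * (1 + (Real.sqrt 5 - 1) / 2) := by
  rintro ⟨r, t₁, t₂, u₁, u₂, hr, ht₁, ht₂, hu₁, hu₂, hsum, husum, h1, h2, h3⟩
  have hs : Real.sqrt 5 ^ 2 = 5 := Real.sq_sqrt (by norm_num)
  have hs2 : 2 < Real.sqrt 5 := by nlinarith [Real.sqrt_nonneg 5]
  rw [min_le_iff] at h2 h3
  rcases h2 with h2 | h2 <;> rcases h3 with h3 | h3 <;>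
    nlinarith [Real.sqrt_nonneg 5, sq_nonneg (r - Real.sqrt 5 + 1)]
end

section
/- Let α = √6 − 2. There do not exist a real ρ with ρ < 6 − 2√6 and nonnegative reals t₁, t₂, x₁, x₂ satisfying all of: t₁ + t₂ = 2, x₁ + x₂ = 2, t₁ ≤ x₁, t₁ ≤ ρ, min(t₂ + 1, x₂ + 1) ≤ (3/2)·ρ, and min(t₂ + α, x₁) ≤ ρ·(2+α)/2. -/
/-- Arithmetic core of Proposition 3: no competitive ratio ρ < 6 − 2√6 is
achievable by two parallel preemptive solutions on two identical machines,
even for inputs sorted by non-increasing sizes. -/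
theorem stmt_3 :
    ¬ ∃ (ρ t₁ t₂ x₁ x₂ : ℝ),
      ρ < 6 - 2 * Real.sqrt 6 ∧
      0 ≤ t₁ ∧ 0 ≤ t₂ ∧ 0 ≤ x₁ ∧ 0 ≤ x₂ ∧
      t₁ + t₂ = 2 ∧
      x₁ + x₂ = 2 ∧
      t₁ ≤ x₁ ∧
      t₁ ≤ ρ ∧
      min (t₂ + 1) (x₂ + 1) ≤ 3 / 2 * ρ ∧
      min (t₂ + (Real.sqrt 6 - 2)) x₁ ≤ ρ * (2 + (Real.sqrt 6 - 2)) / 2 := by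
  rintro ⟨ρ, t₁, t₂, x₁, x₂, hρ, ht₁, ht₂, hx₁, hx₂, hsum, hsumx, hle, htρ, h1, h2⟩
  have hs2 : Real.sqrt 6 ^ 2 = 6 := Real.sq_sqrt (by norm_num)
  have hs : (2:ℝ) ≤ Real.sqrt 6 := by nlinarith [Real.sqrt_nonneg 6]
  rw [min_le_iff] at h1 h2
  rcases h1 with h1 | h1 <;> rcases h2 with h2 | h2 <;> nlinarith [Real.sqrt_nonneg 6]
end

section
/- Let φ = (1+√5)/2 and R = √5 − 1. Let W', p, Q', Q, a₁', a₂' be reals with W' > 0, p > 0, p ≤ (2 − φ)·W where W = W' + p, a₁' + a₂' = W', W'/φ ≤ a₁' ≤ R·Q', Q' ≤ Q, and Q ≥ W/2. Define (a₁, a₂) = (a₁', a₂' + p) if a₂' + p ≤ W/φ², and (a₁, a₂) = (W/φ, W/φ²) otherwise. Then a₁ + a₂ = W and W/φ ≤ a₁ ≤ R·Q; moreover, in the second case, a₂' ≤ W/φ² ≤ a₁' ≤ W/φ (so the time intervals [a₂', W/φ²) and [a₁', W/φ) allocated to the new job on the two machines are disjoint, have nonnegative lengths, and have total length p). -/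
set_option maxHeartbeats 1000000


/-- Invariant preservation for Case 1 of solution A of the two-solution
preemptive algorithm (Section 3): with φ = (1+√5)/2 and R = √5 − 1, the new
loads (a₁, a₂) satisfy a₁ + a₂ = W and W/φ ≤ a₁ ≤ R·Q; moreover, in the
preemptive sub-case, the two allocated intervals are disjoint with
nonnegative lengths. -/
theorem stmt_9 (φ R W' p W Q' Q a₁' a₂' : ℝ)
    (hφ : φ = (1 + Real.sqrt 5) / 2) (hR : R = Real.sqrt 5 - 1)
    (hW : W = W' + p) (hW' : 0 < W') (hp : 0 < p)
    (hpW : p ≤ (2 - φ) * W)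
    (hsum : a₁' + a₂' = W')
    (hlow : W' / φ ≤ a₁') (hhigh : a₁' ≤ R * Q')
    (hQ : Q' ≤ Q) (hQW : Q ≥ W / 2) :
    (if a₂' + p ≤ W / φ ^ 2 then a₁' else W / φ) +
      (if a₂' + p ≤ W / φ ^ 2 then a₂' + p else W / φ ^ 2) = W ∧
    W / φ ≤ (if a₂' + p ≤ W / φ ^ 2 then a₁' else W / φ) ∧
    (if a₂' + p ≤ W / φ ^ 2 then a₁' else W / φ) ≤ R * Q ∧
    (¬ (a₂' + p ≤ W / φ ^ 2) →
      a₂' ≤ W / φ ^ 2 ∧ W / φ ^ 2 ≤ a₁' ∧ a₁' ≤ W / φ) := by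
  have hs : Real.sqrt 5 ^ 2 = 5 := Real.sq_sqrt (by norm_num)
  have hs2 : (2 : ℝ) < Real.sqrt 5 := by
    nlinarith [Real.sqrt_nonneg 5, hs]
  have hφpos : 0 < φ := by rw [hφ]; linarith
  have hφsq : φ ^ 2 = φ + 1 := by rw [hφ]; nlinarith
  have hWpos : 0 < W := by linarith
  have e1 : W / φ = W * (φ - 1) := by
    field_simp
    nlinarith
  have e2 : W / φ ^ 2 = W * (2 - φ) := by
    rw [hφsq]
    field_simp
    nlinarith
  have e3 : W' / φ = W' * (φ - 1) := by
    field_simp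
    nlinarith
  have hφlt2 : φ < 2 := by rw [hφ]; nlinarith
  have hφgt1 : 1 < φ := by rw [hφ]; nlinarith
  have hRφ : R = 2 * (φ - 1) := by rw [hR, hφ]; ring
  rw [e1, e2] at *
  rw [e3] at hlow
  have hQpos : a₁' ≤ R * Q := by
    calc a₁' ≤ R * Q' := hhigh
    _ ≤ R * Q := by
      apply mul_le_mul_of_nonneg_left hQ
      rw [hR]; linarith
  have hlow' : W' * (φ - 1) ≤ a₁' := by linarith
  by_cases h : a₂' + p ≤ W * (2 - φ)
  · simp only [h, if_true]
    exact ⟨by linarith, by linarith, hQpos, fun hc => (hc trivial).elim⟩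
  · simp only [h, if_false]
    push_neg at h
    clear hφ hR hs hs2 e1 e2 e3 hhigh hQ hlow
    have hWφ : W * φ = W' * φ + p * φ := by rw [hW]; ring
    have hWφ2 : W * φ ^ 2 = W * φ + W := by nlinarith [hφsq]
    have hpφ : p * φ ≤ p * 2 := by nlinarith
    refine ⟨by ring, le_refl _, ?_, fun _ => ⟨?_, ?_, ?_⟩⟩
    · rw [hRφ]
      nlinarith [mul_nonneg (show (0:ℝ) ≤ φ - 1 by linarith)
        (show (0:ℝ) ≤ Q - W / 2 by linarith)]
    · nlinarith [mul_pos hp (show (0:ℝ) < 2 - φ by linarith), hlow']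
    · nlinarith [mul_nonneg (show (0:ℝ) ≤ φ - 1 by linarith)
        (show (0:ℝ) ≤ W * (2 - φ) - p by linarith), hlow', hWφ2, hWφ]
    · linarith
end

section
/- Let φ = (1+√5)/2 and R = √5 − 1. Let W', p, Q', Q, b₁', b₂' be reals with W' > 0, p > 0, p ≤ (2 − φ)·W where W = W' + p, b₁' + b₂' = W', 2W'/φ² ≤ b₁' ≤ R²·Q', Q' ≤ Q, and Q ≥ W/2. Define (b₁, b₂) = (b₁', b₂' + p) if b₂' + p ≤ W/φ³, and (b₁, b₂) = (2W/φ², W/φ³) otherwise. Then b₁ + b₂ = W and 2W/φ² ≤ b₁ ≤ R²·Q; moreover, in the second case, b₂' ≤ W/φ³ ≤ b₁' ≤ 2W/φ² (so the time intervals [b₂', W/φ³) and [b₁', 2W/φ²) allocated to the new job on the two machines are disjoint, have nonnegative lengths, and have total length p). -/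
/-- Invariant preservation for Case 1 of solution B of the two-solution
preemptive algorithm (Section 3): with φ = (1+√5)/2 and R = √5 − 1, the new
loads (b₁, b₂) satisfy b₁ + b₂ = W and 2W/φ² ≤ b₁ ≤ R²·Q; moreover, in the
preemptive sub-case, the two allocated intervals are disjoint with
nonnegative lengths. -/
theorem stmt_10 (φ R W' p W Q' Q b₁' b₂' : ℝ)
    (hφ : φ = (1 + Real.sqrt 5) / 2) (hR : R = Real.sqrt 5 - 1)
    (hW : W = W' + p) (hW' : 0 < W') (hp : 0 < p)
    (hpW : p ≤ (2 - φ) * W)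
    (hsum : b₁' + b₂' = W')
    (hlow : 2 * W' / φ ^ 2 ≤ b₁') (hhigh : b₁' ≤ R ^ 2 * Q')
    (hQ : Q' ≤ Q) (hQW : Q ≥ W / 2) :
    (if b₂' + p ≤ W / φ ^ 3 then b₁' else 2 * W / φ ^ 2) +
      (if b₂' + p ≤ W / φ ^ 3 then b₂' + p else W / φ ^ 3) = W ∧
    2 * W / φ ^ 2 ≤ (if b₂' + p ≤ W / φ ^ 3 then b₁' else 2 * W / φ ^ 2) ∧
    (if b₂' + p ≤ W / φ ^ 3 then b₁' else 2 * W / φ ^ 2) ≤ R ^ 2 * Q ∧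
    (¬ (b₂' + p ≤ W / φ ^ 3) →
      b₂' ≤ W / φ ^ 3 ∧ W / φ ^ 3 ≤ b₁' ∧ b₁' ≤ 2 * W / φ ^ 2) := by
  set s := Real.sqrt 5 with hs
  have hs5 : s ^ 2 = 5 := Real.sq_sqrt (by norm_num)
  have hs0 : 0 ≤ s := Real.sqrt_nonneg 5
  have hs2 : 2 < s := by nlinarith
  have hs3 : s < 3 := by nlinarith
  have hφpos : 0 < φ := by rw [hφ]; linarith
  have hφ2 : φ ^ 2 = (3 + s) / 2 := by rw [hφ]; linear_combination (1/4) * hs5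
  have hφ3 : φ ^ 3 = 2 + s := by rw [hφ]; linear_combination ((s + 3)/8) * hs5
  have hR2 : R ^ 2 = 6 - 2 * s := by rw [hR]; linear_combination hs5
  have he2 : 2 * W / φ ^ 2 = (3 - s) * W := by
    rw [hφ2, div_div_eq_mul_div, div_eq_iff (by linarith)]; linear_combination W * hs5
  have he2' : 2 * W' / φ ^ 2 = (3 - s) * W' := by
    rw [hφ2, div_div_eq_mul_div, div_eq_iff (by linarith)]; linear_combination W' * hs5
  have he3 : W / φ ^ 3 = (s - 2) * W := by
    rw [hφ3]; rw [div_eq_iff (by linarith)]; linear_combination (-W) * hs5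
  rw [he2'] at hlow
  rw [hR2] at hhigh
  rw [hφ] at hpW
  have hWpos : 0 < W := by linarith
  have hpW' : 2 * p ≤ (3 - s) * W := by nlinarith [hpW]
  rw [he3, he2, hR2]
  by_cases h : b₂' + p ≤ (s - 2) * W
  · simp only [if_pos h]
    have hub : (6 - 2 * s) * Q' ≤ (6 - 2 * s) * Q :=
      mul_le_mul_of_nonneg_left hQ (by linarith)
    exact ⟨by linarith, by linarith, by linarith, fun hc => absurd h hc⟩
  · simp only [if_neg h]
    push_neg at h
    refine ⟨by ring, le_refl _, ?_, fun _ => ⟨?_, ?_, by linarith⟩⟩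
    · nlinarith [mul_nonneg (by linarith : (0:ℝ) ≤ 3 - s) (by linarith : (0:ℝ) ≤ Q - W / 2)]
    · nlinarith [mul_nonneg (by linarith : (0:ℝ) ≤ s - 2) (by linarith : (0:ℝ) ≤ W - W')]
    · have hW'' : W' = W - p := by linarith
      have h1 : 0 ≤ (3 - s) * ((3 - s) * W - 2 * p) :=
        mul_nonneg (by linarith) (by linarith)
      have h2 : s ^ 2 * W = 5 * W := by rw [hs5]
      have h3 : s * W' = s * W - s * p := by rw [hW'']; ring
      have h5 : 0 ≤ (s - 2) * W := mul_nonneg (by linarith) hWpos.le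
      have h6 : (3 - s) * W' = 3 * W' - s * W' := by ring
      linarith [h1, h2, h3, h5, h6, hlow, hW'']
end

section
/- Let φ = (1+√5)/2 and R = √5 − 1. For all reals W' ≥ 0 and p > W': 2W'/φ + (p − W') ≤ R·p and 4W'/φ² + (p − W') ≤ R²·p. -/
/-- Invariant preservation for Case 3 (a job larger than all previous jobs
together) of the two-solution preemptive algorithm (Section 3): with
φ = (1+√5)/2 and R = √5 − 1, for p > W' ≥ 0 we have
2W'/φ + (p − W') ≤ R·p and 4W'/φ² + (p − W') ≤ R²·p. -/
theorem stmt_12 (φ R W' p : ℝ)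
    (hφ : φ = (1 + Real.sqrt 5) / 2) (hR : R = Real.sqrt 5 - 1)
    (hW' : 0 ≤ W') (hp : W' < p) :
    2 * W' / φ + (p - W') ≤ R * p ∧
    4 * W' / φ ^ 2 + (p - W') ≤ R ^ 2 * p := by
  have hs : Real.sqrt 5 ^ 2 = 5 := Real.sq_sqrt (by norm_num)
  have h2 : (2:ℝ) < Real.sqrt 5 := by nlinarith [Real.sqrt_nonneg 5]
  subst hφ hR
  have hφpos : (0:ℝ) < (1 + Real.sqrt 5) / 2 := by nlinarith
  have e1 : 2 * W' / ((1 + Real.sqrt 5) / 2) = (Real.sqrt 5 - 1) * W' := by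
    field_simp
    nlinarith
  have e2 : 4 * W' / ((1 + Real.sqrt 5) / 2) ^ 2 = (Real.sqrt 5 - 1) ^ 2 * W' := by
    have : ((1 + Real.sqrt 5) / 2) ^ 2 ≠ 0 := by positivity
    field_simp
    linear_combination (-W' * (Real.sqrt 5 ^ 2 + 3)) * hs
  rw [e1, e2]
  have hpw : 0 ≤ p - W' := by linarith
  constructor
  · nlinarith
  · nlinarith [mul_nonneg (by nlinarith [sq_nonneg (Real.sqrt 5 - 5/2)] : (0:ℝ) ≤ (Real.sqrt 5 - 1)^2 - 1) hpw]
end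

section
/- Let R = 6 − 2√6. Let W', p, Q', Q, a₁', a₂' be reals with 0 < p ≤ 2/5, a₁' + a₂' = W', max(1, (R/2)·W') ≤ a₁' ≤ R·Q', Q' ≤ Q, and Q ≥ W/2 where W = W' + p. Define (a₁, a₂) = (a₁', a₂' + p) if a₂' + p ≤ (1 − R/2)·W, and (a₁, a₂) = ((R/2)·W, (1 − R/2)·W) otherwise. Then a₁ + a₂ = W and max(1, (R/2)·W) ≤ a₁ ≤ R·Q; moreover, in the second case, a₂' ≤ (1 − R/2)·W ≤ a₁' ≤ (R/2)·W. -/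
/-- Invariant preservation for the first approach (second job of size at most
0.4) of the sorted-input algorithm (Section 4): with R = 6 − 2√6, the new
loads (a₁, a₂) satisfy a₁ + a₂ = W and max 1 ((R/2)·W) ≤ a₁ ≤ R·Q; in the
preemptive sub-case the allocated intervals are disjoint with nonnegative
lengths. -/
theorem stmt_13 (R W' p W Q' Q a₁' a₂' : ℝ)
    (hR : R = 6 - 2 * Real.sqrt 6)
    (hp : 0 < p) (hp2 : p ≤ 2 / 5) (hW : W = W' + p)
    (hsum : a₁' + a₂' = W')
    (hlow : max 1 (R / 2 * W') ≤ a₁') (hhigh : a₁' ≤ R * Q')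
    (hQ : Q' ≤ Q) (hQW : Q ≥ W / 2) :
    (if a₂' + p ≤ (1 - R / 2) * W then a₁' else R / 2 * W) +
      (if a₂' + p ≤ (1 - R / 2) * W then a₂' + p else (1 - R / 2) * W) = W ∧
    max 1 (R / 2 * W) ≤ (if a₂' + p ≤ (1 - R / 2) * W then a₁' else R / 2 * W) ∧
    (if a₂' + p ≤ (1 - R / 2) * W then a₁' else R / 2 * W) ≤ R * Q ∧
    (¬ (a₂' + p ≤ (1 - R / 2) * W) →
      a₂' ≤ (1 - R / 2) * W ∧ (1 - R / 2) * W ≤ a₁' ∧ a₁' ≤ R / 2 * W) := by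
  have h6 : Real.sqrt 6 * Real.sqrt 6 = 6 := Real.mul_self_sqrt (by norm_num)
  have hs1 : Real.sqrt 6 ≤ 49/20 := by nlinarith [Real.sqrt_nonneg 6]
  have hs2 : (12/5 : ℝ) ≤ Real.sqrt 6 := by nlinarith [Real.sqrt_nonneg 6]
  subst hR
  set s := Real.sqrt 6 with hs
  have h1 : (1:ℝ) ≤ a₁' := le_trans (le_max_left _ _) hlow
  have h2 : (6 - 2*s)/2 * W' ≤ a₁' := le_trans (le_max_right _ _) hlow
  by_cases hc : a₂' + p ≤ (1 - (6 - 2*s) / 2) * W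
  · simp only [if_pos hc]
    refine ⟨by linarith, max_le h1 (by nlinarith), by nlinarith, fun h => absurd hc h⟩
  · simp only [if_neg hc]
    push_neg at hc
    have hW2 : 1 < (6 - 2*s)/2 * W := by nlinarith
    refine ⟨by ring, max_le hW2.le le_rfl, by nlinarith,
      fun _ => ⟨by nlinarith, ?_, by nlinarith⟩⟩
    by_cases hw : (2*s - 4) * W ≤ 2
    · nlinarith
    · push_neg at hw
      nlinarith
end

section
/- Let R = 6 − 2√6. Let W', p, Q', Q, a₁', a₂' be reals with p > 0, W = W' + p, a₁' + a₂' = W', max(R, (R/2)·W') ≤ a₁' ≤ R·Q', Q' ≤ Q, Q ≥ W/2, and such that p ≤ (1 − √6/3)·W or W ≤ √6. Define (a₁, a₂) = (a₁', a₂' + p) if a₂' + p ≤ ((2−R)/2)·W, and (a₁, a₂) = ((R/2)·W, ((2−R)/2)·W) otherwise. Then a₁ + a₂ = W and max(R, (R/2)·W) ≤ a₁ ≤ R·Q; moreover, in the second case, a₂' ≤ ((2−R)/2)·W ≤ a₁' ≤ (R/2)·W. -/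
/-- Invariant preservation for Case 1 of solution A in the second approach of
the sorted-input algorithm (Section 4): with R = 6 − 2√6, under the case
condition (small job or small total size), the new loads (a₁, a₂) satisfy
a₁ + a₂ = W and max R ((R/2)·W) ≤ a₁ ≤ R·Q; in the preemptive sub-case the
allocated intervals are disjoint with nonnegative lengths. -/
theorem stmt_14 (R W' p W Q' Q a₁' a₂' : ℝ)
    (hR : R = 6 - 2 * Real.sqrt 6)
    (hp : 0 < p) (hW : W = W' + p)
    (hsum : a₁' + a₂' = W')
    (hlow : max R (R / 2 * W') ≤ a₁') (hhigh : a₁' ≤ R * Q')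
    (hQ : Q' ≤ Q) (hQW : Q ≥ W / 2)
    (hcase : p ≤ (1 - Real.sqrt 6 / 3) * W ∨ W ≤ Real.sqrt 6) :
    (if a₂' + p ≤ (2 - R) / 2 * W then a₁' else R / 2 * W) +
      (if a₂' + p ≤ (2 - R) / 2 * W then a₂' + p else (2 - R) / 2 * W) = W ∧
    max R (R / 2 * W) ≤ (if a₂' + p ≤ (2 - R) / 2 * W then a₁' else R / 2 * W) ∧
    (if a₂' + p ≤ (2 - R) / 2 * W then a₁' else R / 2 * W) ≤ R * Q ∧
    (¬ (a₂' + p ≤ (2 - R) / 2 * W) →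
      a₂' ≤ (2 - R) / 2 * W ∧ (2 - R) / 2 * W ≤ a₁' ∧ a₁' ≤ R / 2 * W) := by
  have hs : Real.sqrt 6 ^ 2 = 6 := Real.sq_sqrt (by norm_num)
  have hs1 : (2:ℝ) ≤ Real.sqrt 6 := by nlinarith [Real.sqrt_nonneg 6]
  have hs2 : Real.sqrt 6 ≤ 2.5 := by nlinarith [Real.sqrt_nonneg 6]
  have hRpos : 0 < R := by rw [hR]; nlinarith
  have hlow1 : R ≤ a₁' := le_trans (le_max_left _ _) hlow
  have hlow2 : R / 2 * W' ≤ a₁' := le_trans (le_max_right _ _) hlow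
  by_cases h : a₂' + p ≤ (2 - R) / 2 * W
  · simp only [if_pos h]
    refine ⟨by linarith, ?_, ?_, fun hc => absurd h hc⟩
    · exact max_le hlow1 (by nlinarith)
    · calc a₁' ≤ R * Q' := hhigh
        _ ≤ R * Q := by nlinarith
  · simp only [if_neg h]
    push_neg at h
    have hW2 : 2 < W := by nlinarith
    refine ⟨by ring, max_le (by nlinarith) le_rfl, by nlinarith,
      fun _ => ⟨?_, ?_, by nlinarith⟩⟩
    · -- a₂' ≤ (2-R)/2 * W
      rw [hR] at hlow2 ⊢; nlinarith
    · -- (2-R)/2 * W ≤ a₁'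
      rcases hcase with hc | hc
      · rw [hR] at hlow2 ⊢; nlinarith
      · rw [hR] at hlow1 ⊢; nlinarith
end

section
/- Let R = 6 − 2√6 and r = 3√6 − 6. Let W', p, Q', Q, b₁', b₂' be reals with p > 0, W = W' + p, b₁' + b₂' = W', max(r, (3/5)·W') ≤ b₁' ≤ r·Q', Q' ≤ Q, Q ≥ W/2, and such that p ≤ (1 − √6/3)·W or W ≤ √6. Define (b₁, b₂) = (b₁', b₂' + p) if b₂' + p ≤ (2/5)·W, and (b₁, b₂) = ((3/5)·W, (2/5)·W) otherwise. Then b₁ + b₂ = W and max(r, (3/5)·W) ≤ b₁ ≤ r·Q; moreover, in the second case, b₂' ≤ (2/5)·W ≤ b₁' ≤ (3/5)·W. -/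
/-- Invariant preservation for Case 1 of solution B in the second approach of
the sorted-input algorithm (Section 4): with r = 3√6 − 6, under the case
condition (small job or small total size), the new loads (b₁, b₂) satisfy
b₁ + b₂ = W and max r ((3/5)·W) ≤ b₁ ≤ r·Q; in the preemptive sub-case the
allocated intervals are disjoint with nonnegative lengths. -/
theorem stmt_15 (r W' p W Q' Q b₁' b₂' : ℝ)
    (hr : r = 3 * Real.sqrt 6 - 6)
    (hp : 0 < p) (hW : W = W' + p)
    (hsum : b₁' + b₂' = W')
    (hlow : max r (3 / 5 * W') ≤ b₁') (hhigh : b₁' ≤ r * Q')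
    (hQ : Q' ≤ Q) (hQW : Q ≥ W / 2)
    (hcase : p ≤ (1 - Real.sqrt 6 / 3) * W ∨ W ≤ Real.sqrt 6) :
    (if b₂' + p ≤ 2 / 5 * W then b₁' else 3 / 5 * W) +
      (if b₂' + p ≤ 2 / 5 * W then b₂' + p else 2 / 5 * W) = W ∧
    max r (3 / 5 * W) ≤ (if b₂' + p ≤ 2 / 5 * W then b₁' else 3 / 5 * W) ∧
    (if b₂' + p ≤ 2 / 5 * W then b₁' else 3 / 5 * W) ≤ r * Q ∧
    (¬ (b₂' + p ≤ 2 / 5 * W) →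
      b₂' ≤ 2 / 5 * W ∧ 2 / 5 * W ≤ b₁' ∧ b₁' ≤ 3 / 5 * W) := by
  set s := Real.sqrt 6 with hs
  have hs2 : s * s = 6 := Real.mul_self_sqrt (by norm_num)
  have hs0 : 0 ≤ s := Real.sqrt_nonneg 6
  have hslb : 2.44 ≤ s := by nlinarith
  have hsub : s ≤ 2.45 := by nlinarith
  have hlr : r ≤ b₁' := le_trans (le_max_left _ _) hlow
  have hlw : 3 / 5 * W' ≤ b₁' := le_trans (le_max_right _ _) hlow
  split_ifs with h
  · refine ⟨by linarith, ?_, ?_, fun hc => absurd h hc⟩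
    · exact max_le hlr (by linarith)
    · have : r * Q' ≤ r * Q := by nlinarith
      linarith
  · push_neg at h
    have hb1lt : b₁' < 3 / 5 * W := by linarith
    have hWr : r < 3 / 5 * W := lt_of_le_of_lt hlr hb1lt
    have hW0 : 0 < W := by nlinarith
    have h2W : 2 / 5 * W ≤ b₁' := by
      rcases hcase with hc | hc
      · nlinarith
      · nlinarith
    refine ⟨by ring, max_le (le_of_lt hWr) le_rfl, ?_, fun _ => ⟨by linarith, h2W, le_of_lt hb1lt⟩⟩
    nlinarith
end

section
/- Let R = 6 − 2√6 and r = 3√6 − 6. Let W', p, a₁', a₂', b₁', b₂' be reals with W = W' + p, p > (1 − √6/3)·W, W > √6, p ≤ W/3, and such that W ≤ (4/3)·W' or W ≤ 3. Suppose a₁' + a₂' = W' with max(R, (R/2)·W') ≤ a₁' ≤ R·max(1, W'/2), and b₁' + b₂' = W' with max(r, (3/5)·W') ≤ b₁' ≤ r·max(1, W'/2). Let Γ = min(a₂' + p, a₁', (2/5)·W). Then: (1) b₂' ≤ ((2−R)/2)·W ≤ b₁' ≤ (R/2)·W; (2) a₂' ≤ Γ ≤ a₁' ≤ W − Γ; and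 (3) (3/5)·W ≤ W − Γ ≤ (r/2)·W. -/
set_option maxHeartbeats 1600000 in
/-- Validity and invariant preservation for Case 2 (the swap case) of the
second approach of the sorted-input algorithm (Section 4), with R = 6 − 2√6
and r = 3√6 − 6. -/
theorem stmt_16 (R r W' p W a₁' a₂' b₁' b₂' Γ : ℝ)
    (hR : R = 6 - 2 * Real.sqrt 6) (hr : r = 3 * Real.sqrt 6 - 6)
    (hW : W = W' + p)
    (hpbig : (1 - Real.sqrt 6 / 3) * W < p) (hW6 : Real.sqrt 6 < W)
    (hp3 : p ≤ W / 3)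
    (hprev : W ≤ 4 / 3 * W' ∨ W ≤ 3)
    (ha : a₁' + a₂' = W')
    (ha1 : max R (R / 2 * W') ≤ a₁') (ha2 : a₁' ≤ R * max 1 (W' / 2))
    (hb : b₁' + b₂' = W')
    (hb1 : max r (3 / 5 * W') ≤ b₁') (hb2 : b₁' ≤ r * max 1 (W' / 2))
    (hΓ : Γ = min (a₂' + p) (min a₁' (2 / 5 * W))) :
    (b₂' ≤ (2 - R) / 2 * W ∧ (2 - R) / 2 * W ≤ b₁' ∧ b₁' ≤ R / 2 * W) ∧
    (a₂' ≤ Γ ∧ Γ ≤ a₁' ∧ a₁' ≤ W - Γ) ∧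
    (3 / 5 * W ≤ W - Γ ∧ W - Γ ≤ r / 2 * W) := by
  subst hR hr hΓ
  have hs : Real.sqrt 6 ^ 2 = 6 := Real.sq_sqrt (by norm_num)
  set s := Real.sqrt 6 with hsdef
  have hs0 : (0:ℝ) ≤ s := Real.sqrt_nonneg 6
  have hslb : 2.44 ≤ s := by nlinarith [hs, hs0]
  have hsub : s ≤ 2.45 := by nlinarith [hs, hs0]
  have hW0 : 0 < W := by linarith
  have h1 : 2.44 * W ≤ s * W := mul_le_mul_of_nonneg_right hslb hW0.le
  have h2 : s * W ≤ 2.45 * W := mul_le_mul_of_nonneg_right hsub hW0.le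
  have hW'sW : 3 * W' < s * W := by linarith
  have hW'ge : 2 * W ≤ 3 * W' := by linarith
  have hW'0 : 0 < W' := by linarith
  have hp0 : 0 < p := by linarith
  have hs6W : s ^ 2 * W = 6 * W := by rw [hs]
  have hq1 : 0 ≤ (3 - s) * (s * W - 3 * W') :=
    mul_nonneg (by linarith) (by linarith)
  have hq2 : 0 ≤ (3 * s - 6) * (s * W - 3 * W') :=
    mul_nonneg (by linarith) (by linarith)
  have hq3 : 0 ≤ (s - 2) * (s * W - 3 * W') :=
    mul_nonneg (by linarith) (by linarith)
  have hq4 : 0 ≤ (5 - 2 * s) * W' := mul_nonneg (by linarith) hW'0.le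
  have ha1lb1 : 6 - 2 * s ≤ a₁' := le_trans (le_max_left _ _) ha1
  have ha1lb2 : (6 - 2 * s) / 2 * W' ≤ a₁' := le_trans (le_max_right _ _) ha1
  have hb1lb1 : 3 * s - 6 ≤ b₁' := le_trans (le_max_left _ _) hb1
  have hb1lb2 : 3 / 5 * W' ≤ b₁' := le_trans (le_max_right _ _) hb1
  have ha1ub : a₁' ≤ (s - 2) * W := by
    rcases le_total (W' / 2) 1 with h | h
    · rw [max_eq_left h] at ha2
      have hm : (s - 2) * s ≤ (s - 2) * W :=
        mul_le_mul_of_nonneg_left hW6.le (by linarith)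
      linarith [hm, hs, ha2]
    · rw [max_eq_right h] at ha2
      linarith [hq1, hs6W, ha2]
  have hb1ub : b₁' ≤ (3 - s) * W := by
    rcases le_total (W' / 2) 1 with h | h
    · rw [max_eq_left h] at hb2
      have hm : (3 - s) * s ≤ (3 - s) * W :=
        mul_le_mul_of_nonneg_left hW6.le (by linarith)
      linarith [hm, hs, hb2]
    · rw [max_eq_right h] at hb2
      linarith [hq2, hs6W, hb2]
  have hb1lbW : (s - 2) * W ≤ b₁' := by
    rcases hprev with h | h
    · linarith [hb1lb2, h2]
    · have hq : 0 ≤ (s - 2) * (3 - W) := mul_nonneg (by linarith) (by linarith)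
      linarith [hq, hb1lb1]
  have ha1lbW : (8 - 3 * s) / 2 * W ≤ a₁' := by
    rcases hprev with h | h
    · have hq : 0 ≤ (3 - s) * (4 * W' - 3 * W) :=
        mul_nonneg (by linarith) (by linarith)
      linarith [hq, h1, ha1lb2]
    · have hq : 0 ≤ (8 - 3 * s) * (3 - W) := mul_nonneg (by linarith) (by linarith)
      linarith [hq, ha1lb1]
  have hΓub : min (a₂' + p) (min a₁' (2 / 5 * W)) ≤ 2 / 5 * W :=
    (min_le_right _ _).trans (min_le_right _ _)
  refine ⟨⟨?_, ?_, ?_⟩, ⟨?_, ?_, ?_⟩, ?_, ?_⟩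
  · linarith [hb1lb2, hW'sW, h1]
  · linarith [hb1lbW]
  · linarith [hb1ub]
  · refine le_min (by linarith) (le_min ?_ ?_)
    · linarith [hq4, ha, ha1lb2]
    · linarith [hq3, hs6W, ha, ha1lb2, h1]
  · exact (min_le_right _ _).trans (min_le_left _ _)
  · linarith [ha1ub, h2, hΓub]
  · linarith [hΓub]
  · have hΓlb : (8 - 3 * s) / 2 * W ≤ min (a₂' + p) (min a₁' (2 / 5 * W)) := by
      refine le_min ?_ (le_min ?_ ?_)
      · linarith [ha1ub, h1, ha]
      · exact ha1lbW
      · linarith [h1]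
    linarith [hΓlb]
end
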